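/- Let A = k[[t^a, t^{a+1}]], q = a−1, s = aℓ + (ℓ−1) with ℓ ≥ 2 and a ≥ ℓ+3. Set Q = (t^s), I = Q : 𝔪^{a−1}. Then (t^{aℓ+ℓ})^{a−ℓ} ∈ Q but (t^{aℓ+ℓ})^{a−ℓ} ∉ Q I^{(a−ℓ)−1}; hence Q ∩ I^{a−ℓ} ≠ Q I^{a−ℓ−1}, the associated graded ring G(I) is not Cohen–Macaulay, and r_Q(I) = a − ℓ. -/

import Mathlib

set_option maxHeartbeats 1000000
set_option synthInstance.maxHeartbeats 1000000

open PowerSeries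

/-- The numerical semigroup ring `k[[H]]`: power series supported on `H`. -/
noncomputable def ssr (k : Type) [Field k] (H : AddSubmonoid ℕ) :
    Subalgebra k (PowerSeries k) where
  carrier := {f | ∀ n : ℕ, n ∉ H → PowerSeries.coeff n f = 0}
  mul_mem' := by
    intro f g hf hg n hn
    rw [Set.mem_setOf_eq] at hf hg
    rw [PowerSeries.coeff_mul]
    apply Finset.sum_eq_zero
    rintro ⟨i, j⟩ hij
    rw [Finset.HasAntidiagonal.mem_antidiagonal] at hij
    by_cases hi : i ∈ H
    · have hj : j ∉ H := fun hj => hn (hij ▸ H.add_mem hi hj)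
      rw [hg j hj, mul_zero]
    · rw [hf i hi, zero_mul]
  add_mem' := by
    intro f g hf hg n hn
    rw [Set.mem_setOf_eq] at hf hg
    rw [map_add, hf n hn, hg n hn, add_zero]
  one_mem' := by
    intro n hn
    have h0 : n ≠ 0 := fun h => hn (by rw [h]; exact H.zero_mem)
    simp [PowerSeries.coeff_one, h0]
  zero_mem' := by
    intro n _
    simp
  algebraMap_mem' := by
    intro r n hn
    have h0 : n ≠ 0 := fun h => hn (by rw [h]; exact H.zero_mem)
    simp [PowerSeries.algebraMap_apply, PowerSeries.coeff_C, h0]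

/-- The monomial `t^n` as an element of `k[[H]]`, for `n ∈ H`. -/
noncomputable def tp (k : Type) [Field k] (H : AddSubmonoid ℕ) (n : ℕ) (hn : n ∈ H) :
    ssr k H :=
  ⟨PowerSeries.X ^ n, by
    intro m hm
    rw [PowerSeries.coeff_X_pow]
    exact if_neg (fun h => hm (by rw [h]; exact hn))⟩

/-- The maximal ideal of `k[[H]]`, generated by the monomials `t^n`, `0 < n ∈ H`. -/
noncomputable def mIdeal (k : Type) [Field k] (H : AddSubmonoid ℕ) : Ideal (ssr k H) :=
  Ideal.span {x | ∃ n : ℕ, ∃ hn : n ∈ H, 0 < n ∧ x = tp k H n hn}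


abbrev Hc (a : ℕ) : AddSubmonoid ℕ := AddSubmonoid.closure {a, a+1}

lemma mem_Hc_iff {a n : ℕ} : n ∈ Hc a ↔ ∃ x y : ℕ, n = a * x + (a+1) * y := by
  rw [AddSubmonoid.mem_closure_pair]
  constructor
  · rintro ⟨x, y, h⟩
    exact ⟨x, y, by rw [← h]; simp [nsmul_eq_mul]; ring⟩
  · rintro ⟨x, y, h⟩
    exact ⟨x, y, by rw [h]; simp [nsmul_eq_mul]; ring⟩

lemma rep_mem {a u v : ℕ} (h : v ≤ u) : a * u + v ∈ Hc a := by
  obtain ⟨w, rfl⟩ : ∃ w, u = v + w := ⟨u - v, by omega⟩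
  exact mem_Hc_iff.2 ⟨w, v, by ring⟩

lemma Hc_canon {a : ℕ} (ha : 0 < a) : ∀ n, n ∈ Hc a → ∃ u v, n = a * u + v ∧ v ≤ u ∧ v < a := by
  have key : ∀ y : ℕ, ∀ x, ∃ u v, a * x + (a+1) * y = a * u + v ∧ v ≤ u ∧ v < a := by
    intro y
    induction y using Nat.strong_induction_on with
    | _ y ih =>
      intro x
      by_cases hy : y < a
      · exact ⟨x + y, y, by ring, by omega, hy⟩
      · obtain ⟨y', rfl⟩ : ∃ y', y = y' + a := ⟨y - a, by omega⟩
        obtain ⟨u, v, h1, h2, h3⟩ := ih y' (by omega) (x + a + 1)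
        exact ⟨u, v, by rw [← h1]; ring, h2, h3⟩
  intro n hn
  obtain ⟨x, y, rfl⟩ := mem_Hc_iff.1 hn
  exact key y x

lemma Hc_ge_a {a n : ℕ} (h : n ∈ Hc a) (h0 : n ≠ 0) : a ≤ n := by
  obtain ⟨x, y, rfl⟩ := mem_Hc_iff.1 h
  rcases Nat.eq_zero_or_pos x with hx | hx
  · rcases Nat.eq_zero_or_pos y with hy | hy
    · simp [hx, hy] at h0
    · subst hx; nlinarith
  · nlinarith

lemma big_mem {a n : ℕ} (ha : 0 < a) (h : a * (a-1) ≤ n) : n ∈ Hc a := by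
  have h1 : n % a < a := Nat.mod_lt _ ha
  have h2 : a - 1 ≤ n / a := by
    rw [Nat.le_div_iff_mul_le ha]; calc (a-1) * a = a * (a-1) := by ring
      _ ≤ n := h
  have h3 : n = a * (n / a) + n % a := (Nat.div_add_mod n a).symm
  rw [h3]
  exact rep_mem (by omega)

lemma gap_not_mem {a i m : ℕ} (h1 : 1 ≤ i) (h2 : i ≤ a - 1) (hm : m + 1 = a * i) :
    m ∉ Hc a := by
  intro hmem
  obtain ⟨x, y, rfl⟩ := mem_Hc_iff.1 hmem
  have ha2 : 2 ≤ a := by omega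
  by_cases hy : y + 1 < a
  · -- a * x + a * y + (y + 1) = a * i, so a ∣ y + 1 with 0 < y+1 < a
    have hxy : x + y < i := by nlinarith
    obtain ⟨d, hd⟩ : ∃ d, i = x + y + (d + 1) := ⟨i - (x+y) - 1, by omega⟩
    have hexp : a * i = a * x + a * y + a * (d+1) := by rw [hd]; ring
    have h5 : (a+1) * y = a * y + y := by ring
    have hda : a ≤ a * (d+1) := by nlinarith
    omega
  · -- y ≥ a - 1, so m ≥ (a+1)(a-1) = a^2 - 1, m + 1 ≥ a^2, i ≥ a
    have : (a+1) * (a-1) ≤ (a+1) * y := by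
      apply Nat.mul_le_mul_left; omega
    have h4 : a * i ≤ a * (a-1) := by
      apply Nat.mul_le_mul_left; omega
    nlinarith [this, h4, hm]

-- window: elements of Hc a in [aℓ+ℓ-1, a(ℓ+1)-1] are ≤ aℓ+ℓ
lemma window {a ℓ e : ℕ} (hℓ : 2 ≤ ℓ) (haℓ : ℓ + 3 ≤ a) (he : e ∈ Hc a)
    (h1 : a * ℓ + ℓ - 1 ≤ e) (h2 : e + 1 ≤ a * (ℓ+1)) : e ≤ a * ℓ + ℓ := by
  obtain ⟨u, v, rfl, huv, hva⟩ := Hc_canon (by omega) e he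
  rcases Nat.lt_or_ge u (ℓ+1) with hu | hu
  · -- u ≤ ℓ : e = a*u + v ≤ a*ℓ + ℓ? if u ≤ ℓ then v ≤ ℓ...
    have : a * u ≤ a * ℓ := Nat.mul_le_mul_left _ (by omega)
    -- v ≤ u ≤ ℓ
    omega
  · have : a * (ℓ+1) ≤ a * u := Nat.mul_le_mul_left _ hu
    omega



/-- `Psum a s n m`: `m` is a sum of `n` elements of `Hc a` that are `≥ s`, plus an
element of `Hc a`. -/
def Psum (a s : ℕ) : ℕ → ℕ → Prop
  | 0, m => m ∈ Hc a
  | n+1, m => ∃ e m', e ∈ Hc a ∧ s ≤ e ∧ Psum a s n m' ∧ m = e + m'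

lemma Psum_absorb {a s n m h : ℕ} (hp : Psum a s n m) (hh : h ∈ Hc a) :
    Psum a s n (m + h) := by
  induction n generalizing m with
  | zero => exact (Hc a).add_mem hp hh
  | succ n ih =>
    obtain ⟨e, m', he, hse, hp', rfl⟩ := hp
    exact ⟨e, m' + h, he, hse, ih hp', by ring⟩

lemma Psum_low {a s n m : ℕ} (hp : Psum a s n m) : n * s ≤ m := by
  induction n generalizing m with
  | zero => simp
  | succ n ih =>
    obtain ⟨e, m', _, hse, hp', rfl⟩ := hp
    have := ih hp'
    have : (n+1) * s = n * s + s := by ring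
    omega

lemma Psum_gap {a ℓ s n m : ℕ} (hℓ : 2 ≤ ℓ) (haℓ : ℓ + 3 ≤ a)
    (hs1 : s + 1 = a * ℓ + ℓ) (hp : Psum a s n m) (hub : m ≤ n * s + (a - ℓ)) :
    m ≤ n * s + n := by
  induction n generalizing m with
  | zero =>
    simp only [Nat.zero_mul, Nat.zero_add] at *
    rcases Nat.eq_zero_or_pos m with h | h
    · omega
    · have := Hc_ge_a (a := a) hp (by omega); omega
  | succ n ih =>
    obtain ⟨e, m', he, hse, hp', rfl⟩ := hp
    have hlow : n * s ≤ m' := Psum_low hp'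
    have hexp : (n+1) * s = n * s + s := by ring
    -- e ≤ s + (a - ℓ)
    have heub : e + 1 ≤ a * (ℓ + 1) := by
      have : a * (ℓ+1) = a * ℓ + a := by ring
      omega
    have hwin : e ≤ a * ℓ + ℓ := window hℓ haℓ he (by omega) heub
    have hub' : m' ≤ n * s + (a - ℓ) := by omega
    have := ih hp' hub'
    omega

lemma Psum_nonmem {a ℓ s n m : ℕ} (hℓ : 2 ≤ ℓ) (haℓ : ℓ + 3 ≤ a)
    (hs1 : s + 1 = a * ℓ + ℓ) (hn : n + 1 ≤ a - ℓ) (hm : m = n * s + n + 1) :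
    ¬ Psum a s n m := by
  intro hp
  have := Psum_gap hℓ haℓ hs1 hp (by omega)
  omega

/-- Feasibility data: `a*U+V` is a sum of `n` elements of `E = (Hc a)∩[s,∞)`. -/
def Feas (a ℓ n U V : ℕ) : Prop :=
  n * ℓ ≤ U ∧ V ≤ U ∧ V ≤ n * (a-1) ∧ ∀ T, U + T = n * (ℓ+1) → (ℓ-1) * T ≤ V

lemma Feas_add {a ℓ n U V u v : ℕ} (h1 : Feas a ℓ n U V) (h2 : Feas a ℓ 1 u v) :
    Feas a ℓ (n+1) (U + u) (V + v) := by
  obtain ⟨a1, a2, a3, a4⟩ := h1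
  obtain ⟨b1, b2, b3, b4⟩ := h2
  refine ⟨?_, by omega, ?_, ?_⟩
  · have : (n+1) * ℓ = n * ℓ + 1 * ℓ := by ring
    omega
  · have : (n+1) * (a-1) = n * (a-1) + 1 * (a-1) := by ring
    omega
  · intro T hT
    have hexp : (n+1) * (ℓ+1) = n * (ℓ+1) + 1 * (ℓ+1) := by ring
    -- split T into T1 + T2 with U + T1 ≥ n(ℓ+1), u + T2 ≥ 1(ℓ+1) — rather:
    -- T = (n(ℓ+1) - U) + ((ℓ+1) - u) possibly truncated; do case analysis
    rcases Nat.le_total (n * (ℓ+1)) U with hc | hc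
    · -- U covers its share; T ≤ (ℓ+1) - u
      have hT2 : u + T ≤ 1 * (ℓ+1) := by omega
      obtain ⟨T2, hT2'⟩ : ∃ T2, u + T2 = 1 * (ℓ+1) := ⟨1*(ℓ+1) - u, by omega⟩
      have := b4 T2 hT2'
      have hmono : (ℓ-1) * T ≤ (ℓ-1) * T2 := Nat.mul_le_mul_left _ (by omega)
      omega
    · rcases Nat.le_total (1 * (ℓ+1)) u with hd | hd
      · obtain ⟨T1, hT1⟩ : ∃ T1, U + T1 = n * (ℓ+1) := ⟨n*(ℓ+1) - U, by omega⟩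
        have := a4 T1 hT1
        have hmono : (ℓ-1) * T ≤ (ℓ-1) * T1 := Nat.mul_le_mul_left _ (by omega)
        omega
      · obtain ⟨T1, hT1⟩ : ∃ T1, U + T1 = n * (ℓ+1) := ⟨n*(ℓ+1) - U, by omega⟩
        obtain ⟨T2, hT2'⟩ : ∃ T2, u + T2 = 1 * (ℓ+1) := ⟨1*(ℓ+1) - u, by omega⟩
        have k1 := a4 T1 hT1
        have k2 := b4 T2 hT2'
        have hTle : T ≤ T1 + T2 := by omega
        have hmono : (ℓ-1) * T ≤ (ℓ-1) * (T1 + T2) := Nat.mul_le_mul_left _ hTle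
        have : (ℓ-1) * (T1 + T2) = (ℓ-1) * T1 + (ℓ-1) * T2 := by ring
        omega

/-- An element of `E` gives single-element feasibility data. -/
lemma E_feas {a ℓ s g : ℕ} (hℓ : 2 ≤ ℓ) (haℓ : ℓ + 3 ≤ a)
    (hs1 : s + 1 = a * ℓ + ℓ) (hg : g ∈ Hc a) (hsg : s ≤ g) :
    ∃ u v, g = a * u + v ∧ Feas a ℓ 1 u v := by
  obtain ⟨u, v, rfl, huv, hva⟩ := Hc_canon (by omega) g hg
  refine ⟨u, v, rfl, ?_, huv, by omega, ?_⟩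
  · -- ℓ ≤ u
    by_contra hcon
    have : a * u ≤ a * (ℓ-1) := Nat.mul_le_mul_left _ (by omega)
    have : a * (ℓ-1) + a = a * ℓ := by
      have : a * ℓ = a * (ℓ - 1 + 1) := by congr 1; omega
      rw [this]; ring
    omega
  · intro T hT
    simp only [Nat.one_mul] at hT
    rcases Nat.eq_zero_or_pos T with h | h
    · simp [h]
    · -- u ≤ ℓ, with ℓ ≤ u forced below: u = ℓ, T = 1, need v ≥ ℓ-1
      have hu : u ≤ ℓ := by omega
      have hul : ℓ ≤ u := by
        by_contra hcon
        have : a * u ≤ a * (ℓ-1) := Nat.mul_le_mul_left _ (by omega)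
        have h2 : a * (ℓ-1) + a = a * ℓ := by
          have : a * ℓ = a * (ℓ - 1 + 1) := by congr 1; omega
          rw [this]; ring
        omega
      have : u = ℓ := by omega
      subst this
      have hT1 : T = 1 := by omega
      subst hT1
      omega

/-- Feasibility data of one element gives an element of `E`. -/
lemma feas_E {a ℓ s u v : ℕ} (hℓ : 2 ≤ ℓ) (haℓ : ℓ + 3 ≤ a)
    (hs1 : s + 1 = a * ℓ + ℓ) (h : Feas a ℓ 1 u v) :
    a * u + v ∈ Hc a ∧ s ≤ a * u + v := by
  obtain ⟨h1, h2, h3, h4⟩ := h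
  refine ⟨rep_mem h2, ?_⟩
  simp only [Nat.one_mul] at h1 h3 h4
  rcases Nat.lt_or_ge u (ℓ+1) with hu | hu
  · have : u = ℓ := by omega
    subst this
    have := h4 1 (by omega)
    omega
  · have : a * (ℓ+1) ≤ a * u := Nat.mul_le_mul_left _ hu
    have h5 : a * (ℓ+1) = a * ℓ + a := by ring
    omega

lemma Feas_step {a ℓ q s U V : ℕ} (hℓ : 2 ≤ ℓ) (hq : 3 ≤ q) (ha : a = ℓ + q)
    (hs1 : s + 1 = a * ℓ + ℓ) (hf : Feas a ℓ (q+1) U V) :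
    ∃ U' V', a * U' + V' + s = a * U + V ∧ Feas a ℓ q U' V' := by
  obtain ⟨l, rfl⟩ : ∃ l, ℓ = l + 2 := ⟨ℓ - 2, by omega⟩
  obtain ⟨p, rfl⟩ : ∃ p, q = p + 3 := ⟨q - 3, by omega⟩
  obtain ⟨F1, F2, F3, F4⟩ := hf
  have e2 : l + 2 - 1 = l + 1 := rfl
  have hA : a - 1 = l + p + 4 := by omega
  have hF3 : V ≤ (p+4) * (l+p+4) := by
    have e : (p+3+1) * (a-1) = (p+4) * (l+p+4) := by rw [hA]; try ring
    omega
  have hF1 : (p+4) * (l+2) ≤ U := by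
    have e : (p+3+1) * (l+2) = (p+4) * (l+2) := by ring
    omega
  have F4' : ∀ T, U + T = (p+4) * (l+3) → (l+1) * T ≤ V := by
    intro T hT
    have e : (p+3+1) * (l+2+1) = (p+4) * (l+3) := by ring
    have h := F4 T (by omega)
    rw [e2] at h
    exact h
  by_cases hVI : V + 2 ≤ l + 2
  · -- Case I : V ≤ ℓ - 2
    have hU : (p+4) * (l+3) ≤ U := by
      by_contra hcon
      have h := F4' (((p+4)*(l+3)) - U) (by omega)
      have h2 : (l+1) * 1 ≤ (l+1) * ((p+4)*(l+3) - U) := Nat.mul_le_mul_left _ (by omega)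
      omega
    obtain ⟨U', rfl⟩ : ∃ U', U = U' + (l + 3) := by
      refine ⟨U - (l+3), ?_⟩
      have h1 : 1 * (l+3) ≤ (p+4) * (l+3) := Nat.mul_le_mul_right _ (by omega)
      omega
    refine ⟨U', V + (p+4), ?_, ?_, ?_, ?_, ?_⟩
    · have h1 : a * (U' + (l+3)) = a * U' + a * (l+2) + a := by ring
      omega
    · -- (p+3)*(l+2) ≤ U'
      have h1 : (p+4) * (l+3) = (p+3) * (l+2) + (l + p + 6) := by ring
      omega
    · -- V + (p+4) ≤ U'
      have h1 : (p+4) * (l+3) = (p+3) * (l+2) + (l + p + 6) := by ring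
      have h2 : 1 * (l+2) ≤ (p+3) * (l+2) := Nat.mul_le_mul_right _ (by omega)
      omega
    · -- V + (p+4) ≤ (p+3) * (a-1)
      rw [hA]
      have h2 : 1 * (l+p+4) ≤ (p+3) * (l+p+4) := Nat.mul_le_mul_right _ (by omega)
      omega
    · intro T hT
      have h1 : (p+4) * (l+3) = (p+3) * (l+2+1) + (l+3) := by ring
      have hT0 : T = 0 := by omega
      simp [hT0]
  · -- V ≥ ℓ - 1
    by_cases hIIa : V + 1 ≤ U
    · by_cases hIIb : V ≤ (p+3) * (l+p+4) + (l+1)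
      · -- Case II
        obtain ⟨U', rfl⟩ : ∃ U', U = U' + (l+2) := by
          refine ⟨U - (l+2), ?_⟩
          have h2 : 1 * (l+2) ≤ (p+4) * (l+2) := Nat.mul_le_mul_right _ (by omega)
          omega
        obtain ⟨V', rfl⟩ : ∃ V', V = V' + (l+1) := ⟨V - (l+1), by omega⟩
        refine ⟨U', V', ?_, ?_, ?_, ?_, ?_⟩
        · have h1 : a * (U' + (l+2)) = a * U' + a * (l+2) := by ring
          omega
        · have h1 : (p+4) * (l+2) = (p+3) * (l+2) + (l+2) := by ring
          omega
        · omega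
        · rw [hA]; omega
        · intro T hT
          rw [e2]
          have h := F4' (T+1) (by
            have e : (p+4)*(l+3) = (p+3)*(l+2+1) + (l+3) := by ring
            omega)
          have h2 : (l+1) * (T+1) = (l+1) * T + (l+1) := by ring
          omega
      · -- Case III.b : V ≥ (p+3)(l+p+4) + (l+2)
        push_neg at hIIb
        obtain ⟨U', rfl⟩ : ∃ U', U = U' + (l+1) := by
          refine ⟨U - (l+1), ?_⟩
          have h2 : 1 * (l+2) ≤ (p+4) * (l+2) := Nat.mul_le_mul_right _ (by omega)
          omega
        obtain ⟨V', rfl⟩ : ∃ V', V = V' + (2*l+p+6) := by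
          refine ⟨V - (2*l+p+6), ?_⟩
          have h1 : (p+3) * (l+p+4) = l + p + 4 + (p+2) * (l+p+4) := by ring
          have h2 : 0 ≤ (p+2) * (l+p+4) := Nat.zero_le _
          omega
        refine ⟨U', V', ?_, ?_, ?_, ?_, ?_⟩
        · have h1 : a * (U' + (l+1)) = a * U' + a * (l+1) := by ring
          have h2 : a * (l+2) = a * (l+1) + a := by ring
          omega
        · have h1 : (p+4) * (l+2) = (p+3) * (l+2) + (l+2) := by ring
          omega
        · omega
        · rw [hA]
          have h1 : (p+4) * (l+p+4) = (p+3) * (l+p+4) + (l+p+4) := by ring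
          omega
        · intro T hT
          rw [e2]
          -- T ≤ p+2 from F1, then crude bound using V ≥ (p+3)(l+p+4) + l+2
          have hTb : T ≤ p + 2 := by
            have h1 : (p+4) * (l+2) + (p+1) = (p+3) * (l+2+1) + l := by ring
            omega
          have h2 : (l+1) * T ≤ (l+1) * (p+2) := Nat.mul_le_mul_left _ hTb
          have h3 : (l+1) * (p+2) + (2*l+p+6) + (p*p + 5*p + 6) = (p+3) * (l+p+4) + (l+2) := by
            ring
          omega
    · -- Case III.a : V = U
      have hVU : V = U := by omega
      obtain ⟨U', rfl⟩ : ∃ U', U = U' + (l+1) := by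
        refine ⟨U - (l+1), ?_⟩
        have h2 : 1 * (l+2) ≤ (p+4) * (l+2) := Nat.mul_le_mul_right _ (by omega)
        omega
      obtain ⟨V', hV'⟩ : ∃ V', V = V' + (2*l+p+6) := by
        refine ⟨V - (2*l+p+6), ?_⟩
        have h1 : (p+4) * (l+2) = (2*l+p+6) + (p*l + p + 2*l + 2) := by ring
        omega
      subst hV'
      refine ⟨U', V', ?_, ?_, ?_, ?_, ?_⟩
      · have h1 : a * (U' + (l+1)) = a * U' + a * (l+1) := by ring
        have h2 : a * (l+2) = a * (l+1) + a := by ring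
        omega
      · have h1 : (p+4) * (l+2) = (p+3) * (l+2) + (l+2) := by ring
        omega
      · omega
      · rw [hA]
        have h1 : (p+4) * (l+p+4) = (p+3) * (l+p+4) + (l+p+4) := by ring
        omega
      · intro T hT
        rw [e2]
        have hTb : T ≤ p + 2 := by
          have h1 : (p+4) * (l+2) + (p+1) = (p+3) * (l+2+1) + l := by ring
          omega
        -- V' + (2l+p+6) = U' + (l+1), U' + T = (p+3)(l+3)
        -- goal (l+1)T ≤ V' i.e. (l+2)T + l+p+5 ≤ (p+3)(l+3)
        have h2 : (l+2) * T ≤ (l+2) * (p+2) := Nat.mul_le_mul_left _ hTb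
        have h3 : (l+2) * (p+2) + (l+p+5) = (p+3) * (l+2+1) := by ring
        have h4 : (l+2) * T = (l+1) * T + T := by ring
        omega

/-- `Gsum a s n m`: `m` is a sum of `n` elements of `Hc a ∩ [s, ∞)`. -/
def Gsum (a s : ℕ) : ℕ → ℕ → Prop
  | 0, m => m = 0
  | n+1, m => ∃ g m', g ∈ Hc a ∧ s ≤ g ∧ Gsum a s n m' ∧ m = g + m'

lemma Gsum_feas {a ℓ s n m : ℕ} (hℓ : 2 ≤ ℓ) (haℓ : ℓ + 3 ≤ a)
    (hs1 : s + 1 = a * ℓ + ℓ) (hg : Gsum a s n m) :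
    ∃ U V, m = a * U + V ∧ Feas a ℓ n U V := by
  induction n generalizing m with
  | zero =>
    refine ⟨0, 0, by simpa [Gsum] using hg, ?_, ?_, ?_, ?_⟩ <;> simp
  | succ n ih =>
    obtain ⟨g, m', hgH, hgs, hg', rfl⟩ := hg
    obtain ⟨U, V, rfl, hUV⟩ := ih hg'
    obtain ⟨u, v, rfl, huv⟩ := E_feas hℓ haℓ hs1 hgH hgs
    exact ⟨U + u, V + v, by ring, Feas_add hUV huv⟩

lemma Feas_split {a ℓ c U V : ℕ} (hℓ : 2 ≤ ℓ) (haℓ : ℓ + 3 ≤ a) (hc : 1 ≤ c)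
    (hf : Feas a ℓ (c+1) U V) :
    ∃ u v U₂ V₂, U = u + U₂ ∧ V = v + V₂ ∧ Feas a ℓ 1 u v ∧ Feas a ℓ c U₂ V₂ := by
  obtain ⟨F1, F2, F3, F4⟩ := hf
  have e1 : (c+1)*(ℓ+1) = c*(ℓ+1) + (ℓ+1) := by ring
  have e2 : (c+1)*(a-1) = c*(a-1) + (a-1) := by ring
  have e3 : c*(ℓ+2) = c*(ℓ+1) + c := by ring
  have m1 : c*(ℓ+2) ≤ c*(a-1) := Nat.mul_le_mul_left _ (by omega)
  have e4 : c*(ℓ+1) = c*ℓ + c := by ring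
  have e5 : (c+1)*ℓ = c*ℓ + ℓ := by ring
  have e6 : (c+1)*(a-1) ≥ (c+1)*(ℓ+2) := Nat.mul_le_mul_left _ (by omega)
  have e7 : (c+1)*(ℓ+2) = (c+1)*(ℓ+1) + (c+1) := by ring
  by_cases hA : (c+1)*(ℓ+1) ≤ U
  · -- all entries can be large
    refine ⟨min (U - c*(ℓ+1)) (a-1), V - min V (min (U - min (U - c*(ℓ+1)) (a-1)) (c*(a-1))),
      U - min (U - c*(ℓ+1)) (a-1), min V (min (U - min (U - c*(ℓ+1)) (a-1)) (c*(a-1))),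
      by omega, by omega, ⟨by omega, by omega, by omega, ?_⟩, ⟨by omega, by omega, by omega, ?_⟩⟩
    · intro T hT
      have hT0 : T = 0 := by omega
      subst hT0; simp
    · intro T hT
      have hT0 : T = 0 := by omega
      subst hT0; simp
  · by_cases hB1 : (c+1)*ℓ + 1 ≤ U
    · -- one entry ℓ+1, rest gets U - (ℓ+1)
      refine ⟨ℓ+1, V - min V (U - (ℓ+1)), U - (ℓ+1), min V (U - (ℓ+1)),
        by omega, by omega, ⟨by omega, by omega, by omega, ?_⟩, ⟨by omega, by omega, ?_, ?_⟩⟩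
      · intro T hT
        have hT0 : T = 0 := by omega
        subst hT0; simp
      · -- V₂ ≤ c*(a-1)
        omega
      · intro T hT
        have hs := F4 T (by omega)
        have hTc : T ≤ c := by omega
        have m2 : (ℓ-1)*T ≤ (ℓ-1)*c := Nat.mul_le_mul_left _ hTc
        have m3 : (ℓ-1)*c ≤ ℓ*c := Nat.mul_le_mul_right _ (by omega)
        have e8 : ℓ*c = c*ℓ := by ring
        omega
    · -- all entries exactly ℓ
      have hU : U = (c+1)*ℓ := by omega
      have hV1 : (ℓ-1)*(c+1) ≤ V := F4 (c+1) (by omega)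
      have e9 : (ℓ-1)*(c+1) = (ℓ-1)*c + (ℓ-1) := by ring
      have m4 : (ℓ-1)*c ≤ ℓ*c := Nat.mul_le_mul_right _ (by omega)
      have e8 : ℓ*c = c*ℓ := by ring
      refine ⟨ℓ, max (ℓ-1) (V - c*ℓ), c*ℓ, V - max (ℓ-1) (V - c*ℓ),
        by omega, by omega, ⟨by omega, by omega, by omega, ?_⟩, ⟨by omega, by omega, ?_, ?_⟩⟩
      · intro T hT
        have hT1 : T = 1 := by omega
        subst hT1
        simpa using (by omega : ℓ - 1 ≤ max (ℓ-1) (V - c*ℓ))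
      · -- V₂ ≤ c*(a-1)
        have m5 : c*ℓ ≤ c*(a-1) := Nat.mul_le_mul_left _ (by omega)
        omega
      · intro T hT
        have hTc : T = c := by omega
        subst hTc
        omega

section RingLemmas
variable {k : Type} [Field k]

lemma tp_coe {H : AddSubmonoid ℕ} {n : ℕ} (hn : n ∈ H) :
    (tp k H n hn : PowerSeries k) = X ^ n := rfl

lemma tp_mul {H : AddSubmonoid ℕ} {m n : ℕ} (hm : m ∈ H) (hn : n ∈ H) :
    tp k H m hm * tp k H n hn = tp k H (m+n) (H.add_mem hm hn) := by
  apply Subtype.ext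
  show (X:PowerSeries k)^m * X^n = X^(m+n)
  rw [pow_add]

lemma tp_congr {H : AddSubmonoid ℕ} {m n : ℕ} (hm : m ∈ H) (h : m = n) :
    tp k H m hm = tp k H n (h ▸ hm) := by subst h; rfl

lemma tp_pow {H : AddSubmonoid ℕ} {m : ℕ} (hm : m ∈ H) (j : ℕ) :
    tp k H m hm ^ j = tp k H (j * m) (by
      simpa [nsmul_eq_mul] using nsmul_mem hm j) := by
  induction j with
  | zero =>
    apply Subtype.ext
    show ((tp k H m hm)^0 : ssr k H).val = (X:PowerSeries k)^(0*m)
    simp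
  | succ j ih =>
    rw [pow_succ, ih, tp_mul]
    exact tp_congr _ (by ring)

lemma tp_one {H : AddSubmonoid ℕ} : tp k H 0 H.zero_mem = 1 := by
  apply Subtype.ext
  show (X:PowerSeries k)^0 = 1
  simp

/-- Coefficient characterization of elements of `Q = (t^s)`. -/
lemma mem_Q_coeff {a s : ℕ} (hs : s ∈ Hc a) {f : ssr k (Hc a)}
    (hf : f ∈ Ideal.span {tp k (Hc a) s hs}) :
    ∀ n, PowerSeries.coeff n (f : PowerSeries k) ≠ 0 → ∃ m, m ∈ Hc a ∧ n = s + m := by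
  rw [Ideal.mem_span_singleton] at hf
  obtain ⟨c, hc⟩ := hf
  intro n hn
  have hcoe : (f : PowerSeries k) = (X:PowerSeries k)^s * (c : PowerSeries k) := by
    rw [hc]; rfl
  rw [hcoe, PowerSeries.coeff_X_pow_mul'] at hn
  by_cases hsn : s ≤ n
  · rw [if_pos hsn] at hn
    by_cases hH : n - s ∈ Hc a
    · exact ⟨n - s, hH, by omega⟩
    · exact absurd (c.2 _ hH) hn
  · rw [if_neg hsn] at hn
    exact absurd rfl hn

lemma mem_Q_of {a s n : ℕ} (hs : s ∈ Hc a) (hn : n ∈ Hc a) {m : ℕ} (hm : m ∈ Hc a)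
    (h : n = s + m) : tp k (Hc a) n hn ∈ Ideal.span {tp k (Hc a) s hs} := by
  rw [Ideal.mem_span_singleton]
  exact ⟨tp k (Hc a) m hm, by rw [tp_mul]; exact (tp_congr _ h.symm).symm⟩

/-- monomials in powers of the maximal ideal -/
lemma tp_mem_mpow {a : ℕ} (haH : a ∈ Hc a) (ha1H : (a:ℕ) + 1 ∈ Hc a) (n j : ℕ) (hj : j ≤ n) :
    tp k (Hc a) (a*n + j) (rep_mem hj) ∈
      (Ideal.span {tp k (Hc a) a haH, tp k (Hc a) (a+1) ha1H}) ^ n := by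
  induction n generalizing j with
  | zero =>
    have hj0 : j = 0 := by omega
    subst hj0
    rw [pow_zero, Ideal.one_eq_top]
    trivial
  | succ n ih =>
    rw [pow_succ]
    rcases Nat.lt_or_ge j (n+1) with h | h
    · have hmem := Submodule.mul_mem_mul (ih j (by omega))
        (Ideal.subset_span (by left; rfl) :
          tp k (Hc a) a haH ∈ Ideal.span {tp k (Hc a) a haH, tp k (Hc a) (a+1) ha1H})
      rw [tp_mul] at hmem
      have he : a*n + j + a = a*(n+1) + j := by ring
      rw [tp_congr _ he] at hmem
      exact hmem
    · have hj1 : j = n + 1 := by omega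
      subst hj1
      have hmem := Submodule.mul_mem_mul (ih n (le_refl n))
        (Ideal.subset_span (by right; rfl) :
          tp k (Hc a) (a+1) ha1H ∈ Ideal.span {tp k (Hc a) a haH, tp k (Hc a) (a+1) ha1H})
      rw [tp_mul] at hmem
      have he : a*n + n + (a+1) = a*(n+1) + (n+1) := by ring
      rw [tp_congr _ he] at hmem
      exact hmem

lemma mul_mem_span_of {R : Type*} [CommRing R] (c : R) (S T : Set R)
    (h : ∀ x ∈ S, c * x ∈ Ideal.span T) :
    ∀ p ∈ Ideal.span S, c * p ∈ Ideal.span T := by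
  intro p hp
  induction hp using Submodule.span_induction with
  | mem x hx => exact h x hx
  | zero => rw [mul_zero]; exact Ideal.zero_mem _
  | add x y _ _ hx hy => rw [mul_add]; exact Ideal.add_mem _ hx hy
  | smul r x _ hx => rw [mul_smul_comm]; exact Submodule.smul_mem _ _ hx

lemma span_mul_span_le {R : Type*} [CommRing R] {S T W : Set R}
    (h : ∀ x ∈ S, ∀ y ∈ T, x * y ∈ Ideal.span W) :
    Ideal.span S * Ideal.span T ≤ Ideal.span W := by
  rw [Ideal.span_mul_span', Ideal.span_le]
  rintro z hz
  rw [Set.mem_mul] at hz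
  obtain ⟨x, hx, y, hy, rfl⟩ := hz
  exact h x hx y hy

/-- powers of the maximal ideal are spanned by monomials -/
lemma mpow_le_span {a : ℕ} (haH : a ∈ Hc a) (ha1H : (a:ℕ) + 1 ∈ Hc a) (n : ℕ) :
    (Ideal.span {tp k (Hc a) a haH, tp k (Hc a) (a+1) ha1H}) ^ n ≤
      Ideal.span {x | ∃ j, ∃ hj : j ≤ n, x = tp k (Hc a) (a*n + j) (rep_mem hj)} := by
  induction n with
  | zero =>
    intro x _
    have h1 : (1 : ssr k (Hc a)) ∈
        Ideal.span {x | ∃ j, ∃ hj : j ≤ 0, x = tp k (Hc a) (a*0 + j) (rep_mem hj)} := by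
      apply Ideal.subset_span
      refine ⟨0, le_refl 0, ?_⟩
      rw [← tp_one]
      exact (tp_congr _ (by ring)).symm
    rw [← Ideal.eq_top_iff_one] at h1
    rw [h1]
    trivial
  | succ n ih =>
    rw [pow_succ]
    refine le_trans (Ideal.mul_mono ih (le_refl _)) ?_
    apply span_mul_span_le
    rintro x ⟨j, hj, rfl⟩ y hy
    rcases hy with hy | hy
    · subst hy
      rw [tp_mul]
      apply Ideal.subset_span
      exact ⟨j, by omega, (tp_congr _ (by ring)).symm⟩
    · rw [Set.mem_singleton_iff] at hy
      subst hy
      rw [tp_mul]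
      apply Ideal.subset_span
      exact ⟨j+1, by omega, (tp_congr _ (by ring)).symm⟩

variable {a ℓ s : ℕ}

/-- monomials of degree ≥ s lie in the colon ideal I = Q : 𝔪^(a-1) -/
lemma tp_mem_I (hℓ : 2 ≤ ℓ) (haℓ : ℓ + 3 ≤ a) (hs1 : s + 1 = a * ℓ + ℓ)
    (haH : a ∈ Hc a) (ha1H : (a:ℕ) + 1 ∈ Hc a) (hs : s ∈ Hc a)
    {m : ℕ} (hmH : m ∈ Hc a) (hsm : s ≤ m) :
    tp k (Hc a) m hmH ∈ Submodule.colon (Ideal.span {tp k (Hc a) s hs})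
      (((Ideal.span {tp k (Hc a) a haH, tp k (Hc a) (a+1) ha1H}) ^ (a-1) : Ideal (ssr k (Hc a))) : Set (ssr k (Hc a))) := by
  rw [Submodule.mem_colon]
  intro p hp
  have hp' := mpow_le_span haH ha1H (a-1) hp
  rw [smul_eq_mul]
  refine mul_mem_span_of _ _ _ ?_ p hp'
  rintro x ⟨j, hj, rfl⟩
  rw [tp_mul]
  obtain ⟨hh, hhh, hbig⟩ : ∃ hh, m + (a*(a-1) + j) = s + hh ∧ a*(a-1) ≤ hh :=
    ⟨m + (a*(a-1) + j) - s, by omega, by omega⟩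
  exact mem_Q_of hs _ (big_mem (by omega) hbig) hhh

/-- elements of the colon ideal have all coefficients below s vanishing -/
lemma I_coeff_low (hℓ : 2 ≤ ℓ) (haℓ : ℓ + 3 ≤ a) (hs1 : s + 1 = a * ℓ + ℓ)
    (haH : a ∈ Hc a) (ha1H : (a:ℕ) + 1 ∈ Hc a) (hs : s ∈ Hc a)
    {f : ssr k (Hc a)}
    (hf : f ∈ Submodule.colon (Ideal.span {tp k (Hc a) s hs})
      (((Ideal.span {tp k (Hc a) a haH, tp k (Hc a) (a+1) ha1H}) ^ (a-1) : Ideal (ssr k (Hc a))) : Set (ssr k (Hc a)))) :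
    ∀ n, PowerSeries.coeff n (f : PowerSeries k) ≠ 0 → s ≤ n := by
  intro n hn
  by_contra hns
  push_neg at hns
  -- s < a*(a-1)
  have hsa : s < a * (a-1) := by
    have h1 : a * (ℓ+1) ≤ a * (a-1) := Nat.mul_le_mul_left _ (by omega)
    have h2 : a * (ℓ+1) = a * ℓ + a := by ring
    omega
  obtain ⟨x, hx⟩ : ∃ x, x = n + a*(a-1) - s := ⟨_, rfl⟩
  have hxlt : x < a * (a-1) := by omega
  have hmlt : x % a < a := Nat.mod_lt _ (by omega)
  have hdm := Nat.div_add_mod x a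
  obtain ⟨dv, rv, hxdr, hrva⟩ : ∃ dv rv, x = a * dv + rv ∧ rv < a :=
    ⟨x / a, x % a, (Nat.div_add_mod x a).symm, hmlt⟩
  obtain ⟨j, hj⟩ : ∃ j, j = a - 1 - rv := ⟨_, rfl⟩
  have hkey : x + j + 1 = a * (dv + 1) := by
    have e : a * (dv + 1) = a * dv + a := by ring
    omega
  have hilt : dv + 1 ≤ a - 1 := by
    have hlt : dv < a - 1 := by
      by_contra hcon
      have : a * (a-1) ≤ a * dv := Nat.mul_le_mul_left _ (by omega)
      omega
    omega
  have hja : j ≤ a - 1 := by omega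
  -- f * t^w ∈ Q for w = a(a-1)+j
  have hcolon := Submodule.mem_colon.1 hf _ (tp_mem_mpow haH ha1H (a-1) j hja)
  rw [smul_eq_mul] at hcolon
  have hcoeff : PowerSeries.coeff (n + (a*(a-1)+j))
      ((f * tp k (Hc a) (a*(a-1)+j) (rep_mem hja) : ssr k (Hc a)) : PowerSeries k) =
      PowerSeries.coeff n (f : PowerSeries k) := by
    show PowerSeries.coeff (n + (a*(a-1)+j)) ((f : PowerSeries k) * X^(a*(a-1)+j)) = _
    rw [PowerSeries.coeff_mul_X_pow]
  obtain ⟨m, hmH, hm⟩ := mem_Q_coeff hs hcolon _ (by rw [hcoeff]; exact hn)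
  have hmval : m + 1 = a * (dv + 1) := by omega
  exact gap_not_mem (by omega) hilt hmval hmH

/-- upper bound ideals: support contained in s + (n-fold sums of E) + H -/
noncomputable def KQ (k : Type) [Field k] (a s n : ℕ) : Ideal (ssr k (Hc a)) where
  carrier := {f | ∀ N, PowerSeries.coeff N (f : PowerSeries k) ≠ 0 →
    ∃ m, Psum a s n m ∧ N = s + m}
  add_mem' := by
    intro f g hf hg N hN
    rw [Subalgebra.coe_add, map_add] at hN
    by_cases h1 : PowerSeries.coeff N (f : PowerSeries k) ≠ 0
    · exact hf N h1
    · push_neg at h1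
      exact hg N (by rw [h1, zero_add] at hN; exact hN)
  zero_mem' := by
    intro N hN
    simp at hN
  smul_mem' := by
    intro c f hf N hN
    have hcoe : ((c • f : ssr k (Hc a)) : PowerSeries k) =
        (c : PowerSeries k) * (f : PowerSeries k) := rfl
    rw [hcoe, PowerSeries.coeff_mul] at hN
    obtain ⟨⟨i, j⟩, hij, hne⟩ := Finset.exists_ne_zero_of_sum_ne_zero hN
    rw [Finset.HasAntidiagonal.mem_antidiagonal] at hij
    have hci : PowerSeries.coeff i (c : PowerSeries k) ≠ 0 := fun h => hne (by rw [h, zero_mul])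
    have hfj : PowerSeries.coeff j (f : PowerSeries k) ≠ 0 := fun h => hne (by rw [h, mul_zero])
    have hiH : i ∈ Hc a := by
      by_contra hcon
      exact hci (c.2 _ hcon)
    obtain ⟨m, hPm, rfl⟩ := hf j hfj
    exact ⟨m + i, Psum_absorb hPm hiH, by omega⟩

lemma Q_le_KQ0 (hs : s ∈ Hc a) :
    Ideal.span {tp k (Hc a) s hs} ≤ KQ k a s 0 := by
  intro f hf N hN
  obtain ⟨m, hmH, hm⟩ := mem_Q_coeff hs hf N hN
  exact ⟨m, hmH, hm⟩

lemma QIn_le_KQ (hℓ : 2 ≤ ℓ) (haℓ : ℓ + 3 ≤ a) (hs1 : s + 1 = a * ℓ + ℓ)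
    (haH : a ∈ Hc a) (ha1H : (a:ℕ) + 1 ∈ Hc a) (hs : s ∈ Hc a) (n : ℕ) :
    Ideal.span {tp k (Hc a) s hs} *
      (Submodule.colon (Ideal.span {tp k (Hc a) s hs})
        (((Ideal.span {tp k (Hc a) a haH, tp k (Hc a) (a+1) ha1H}) ^ (a-1) : Ideal (ssr k (Hc a))) : Set (ssr k (Hc a)))) ^ n ≤
      KQ k a s n := by
  induction n with
  | zero =>
    rw [pow_zero, mul_one]
    exact Q_le_KQ0 hs
  | succ n ih =>
    rw [pow_succ, ← mul_assoc]
    refine le_trans (Ideal.mul_mono ih (le_refl _)) ?_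
    rw [Ideal.mul_le]
    intro r hr g hg N hN
    have : ((r * g : ssr k (Hc a)) : PowerSeries k) =
      (r : PowerSeries k) * (g : PowerSeries k) := rfl
    rw [this, PowerSeries.coeff_mul] at hN
    obtain ⟨⟨i, j⟩, hij, hne⟩ := Finset.exists_ne_zero_of_sum_ne_zero hN
    rw [Finset.HasAntidiagonal.mem_antidiagonal] at hij
    have hri : PowerSeries.coeff i (r : PowerSeries k) ≠ 0 := fun h => hne (by rw [h, zero_mul])
    have hgj : PowerSeries.coeff j (g : PowerSeries k) ≠ 0 := fun h => hne (by rw [h, mul_zero])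
    obtain ⟨m, hPm, rfl⟩ := hr i hri
    have hjH : j ∈ Hc a := by
      by_contra hcon
      exact hgj (g.2 _ hcon)
    have hjs : s ≤ j := I_coeff_low hℓ haℓ hs1 haH ha1H hs hg j hgj
    exact ⟨j + m, ⟨j, m, hjH, hjs, hPm, rfl⟩, by omega⟩

lemma tp_not_mem_QIn (hℓ : 2 ≤ ℓ) (haℓ : ℓ + 3 ≤ a) (hs1 : s + 1 = a * ℓ + ℓ)
    (haH : a ∈ Hc a) (ha1H : (a:ℕ) + 1 ∈ Hc a) (hs : s ∈ Hc a)
    {n : ℕ} (hn : n + 1 ≤ a - ℓ) (hNH : (n+1) * (a*ℓ+ℓ) ∈ Hc a) :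
    tp k (Hc a) ((n+1) * (a*ℓ+ℓ)) hNH ∉
      Ideal.span {tp k (Hc a) s hs} *
      (Submodule.colon (Ideal.span {tp k (Hc a) s hs})
        (((Ideal.span {tp k (Hc a) a haH, tp k (Hc a) (a+1) ha1H}) ^ (a-1) : Ideal (ssr k (Hc a))) : Set (ssr k (Hc a)))) ^ n := by
  intro hmem
  have hK := QIn_le_KQ hℓ haℓ hs1 haH ha1H hs n hmem
  have hco : PowerSeries.coeff ((n+1) * (a*ℓ+ℓ))
      ((tp k (Hc a) ((n+1) * (a*ℓ+ℓ)) hNH : ssr k (Hc a)) : PowerSeries k) = 1 := by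
    rw [tp_coe, PowerSeries.coeff_X_pow, if_pos rfl]
  obtain ⟨m, hPm, hNm⟩ := hK _ (by rw [hco]; exact one_ne_zero)
  have he : (n+1) * (s+1) = s + (n*s + n + 1) := by ring
  have he2 : (n+1) * (a*ℓ+ℓ) = (n+1) * (s+1) := by rw [hs1]
  have hmeq : m = n*s + n + 1 := by omega
  exact Psum_nonmem hℓ haℓ hs1 hn hmeq hPm


/-- The colon ideal is contained in the span of the monomials `t^g`, `s ≤ g < s + a(a-1)`. -/
lemma I_le_span_gen (hℓ : 2 ≤ ℓ) (haℓ : ℓ + 3 ≤ a) (hs1 : s + 1 = a * ℓ + ℓ)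
    (haH : a ∈ Hc a) (ha1H : (a:ℕ) + 1 ∈ Hc a) (hs : s ∈ Hc a) :
    Submodule.colon (Ideal.span {tp k (Hc a) s hs})
      (((Ideal.span {tp k (Hc a) a haH, tp k (Hc a) (a+1) ha1H}) ^ (a-1) : Ideal (ssr k (Hc a))) : Set (ssr k (Hc a))) ≤
    Ideal.span {x | ∃ g, ∃ hg : g ∈ Hc a, s ≤ g ∧ g < s + a*(a-1) ∧ x = tp k (Hc a) g hg} := by
  classical
  intro f hf
  have hlow := I_coeff_low hℓ haℓ hs1 haH ha1H hs hf
  set fb : ssr k (Hc a) := ⟨PowerSeries.mk (fun m => if a*(a-1) ≤ m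
      then PowerSeries.coeff (m+s) (f : PowerSeries k) else 0), by
    intro n hn
    rw [PowerSeries.coeff_mk]
    split_ifs with h
    · exact absurd (big_mem (by omega) h) hn
    · rfl⟩ with hfb
  set F : ℕ → ssr k (Hc a) := fun g =>
    if hg : g ∈ Hc a then (algebraMap k (ssr k (Hc a)) (PowerSeries.coeff g (f : PowerSeries k)))
      * tp k (Hc a) g hg else 0 with hF
  have hsum : f = tp k (Hc a) s hs * fb + ∑ g ∈ Finset.Ico s (s + a*(a-1)), F g := by
    apply Subtype.ext
    apply PowerSeries.ext
    intro N
    set CN : ssr k (Hc a) →ₗ[k] k :=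
      (PowerSeries.coeff N).comp (((ssr k (Hc a)).val).toLinearMap) with hCN
    have hCNapp : ∀ x : ssr k (Hc a), CN x = PowerSeries.coeff N (x : PowerSeries k) :=
      fun x => rfl
    have hrhs : PowerSeries.coeff N
        ((tp k (Hc a) s hs * fb + ∑ g ∈ Finset.Ico s (s + a*(a-1)), F g : ssr k (Hc a))
          : PowerSeries k) =
        PowerSeries.coeff N ((X:PowerSeries k)^s * (fb : PowerSeries k)) +
        ∑ g ∈ Finset.Ico s (s + a*(a-1)), CN (F g) := by
      rw [← hCNapp, map_add, map_sum]
      rfl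
    rw [hrhs]
    have hterm : ∀ g, CN (F g) =
        if g ∈ Hc a then PowerSeries.coeff g (f : PowerSeries k) *
          (if N = g then 1 else 0) else 0 := by
      intro g
      simp only [hF]
      by_cases hg : g ∈ Hc a
      · rw [dif_pos hg, if_pos hg, hCNapp]
        have hcoe : (((algebraMap k (ssr k (Hc a)) (PowerSeries.coeff g (f : PowerSeries k)))
            * tp k (Hc a) g hg : ssr k (Hc a)) : PowerSeries k) =
            PowerSeries.C (PowerSeries.coeff g (f : PowerSeries k)) * (X:PowerSeries k)^g := by
          show (algebraMap k (PowerSeries k) _) * (X:PowerSeries k)^g = _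
          rw [PowerSeries.algebraMap_apply]
          simp
        rw [hcoe, PowerSeries.coeff_C_mul, PowerSeries.coeff_X_pow]
      · rw [dif_neg hg, if_neg hg, map_zero]
    rw [PowerSeries.coeff_X_pow_mul']
    have hfbco : (fb : PowerSeries k) = PowerSeries.mk (fun m => if a*(a-1) ≤ m
        then PowerSeries.coeff (m+s) (f : PowerSeries k) else 0) := rfl
    rw [hfbco]
    simp only [PowerSeries.coeff_mk]
    by_cases hN1 : N < s
    · have hL : PowerSeries.coeff N (f : PowerSeries k) = 0 := by
        by_contra hcon
        exact absurd (hlow N hcon) (by omega)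
      rw [hL, if_neg (by omega), zero_add]
      apply (Finset.sum_eq_zero _).symm
      intro g hg
      rw [Finset.mem_Ico] at hg
      rw [hterm]
      split_ifs <;> first | omega | simp
    · push_neg at hN1
      by_cases hN2 : N < s + a*(a-1)
      · rw [if_pos (by omega), if_neg (by omega), zero_add]
        rw [Finset.sum_eq_single N]
        · rw [hterm]
          by_cases hNH : N ∈ Hc a
          · rw [if_pos hNH, if_pos rfl, mul_one]
          · rw [if_neg hNH, f.2 N hNH]
        · intro g _ hgN
          rw [hterm]
          split_ifs <;> first | omega | simp
        · intro hNmem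
          exact absurd (Finset.mem_Ico.2 (by omega)) hNmem
      · push_neg at hN2
        rw [if_pos (by omega), if_pos (by omega), Nat.sub_add_cancel (by omega)]
        have hzero : ∑ g ∈ Finset.Ico s (s + a*(a-1)), CN (F g) = 0 := by
          apply Finset.sum_eq_zero
          intro g hg
          rw [Finset.mem_Ico] at hg
          rw [hterm]
          split_ifs <;> first | omega | simp
        rw [hzero, add_zero]
  rw [hsum]
  apply Ideal.add_mem
  · refine Ideal.mul_mem_right fb _ (Ideal.subset_span ?_)
    have hpos : 0 < a*(a-1) := Nat.mul_pos (by omega) (by omega)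
    exact ⟨s, hs, le_refl s, by omega, rfl⟩
  · apply Submodule.sum_mem
    intro g hg
    rw [Finset.mem_Ico] at hg
    simp only [hF]
    by_cases h1 : g ∈ Hc a
    · rw [dif_pos h1]
      exact Ideal.mul_mem_left _ _ (Ideal.subset_span ⟨g, h1, hg.1, hg.2, rfl⟩)
    · rw [dif_neg h1]
      exact Ideal.zero_mem _

lemma spanGen_pow_le (n : ℕ) :
    (Ideal.span {x | ∃ g, ∃ hg : g ∈ Hc a, s ≤ g ∧ g < s + a*(a-1) ∧
      x = tp k (Hc a) g hg})^n ≤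
    Ideal.span {x | ∃ m, ∃ hm : m ∈ Hc a, Gsum a s n m ∧ x = tp k (Hc a) m hm} := by
  induction n with
  | zero =>
    intro x _
    have h1 : (1 : ssr k (Hc a)) ∈
        Ideal.span {x | ∃ m, ∃ hm : m ∈ Hc a, Gsum a s 0 m ∧ x = tp k (Hc a) m hm} := by
      apply Ideal.subset_span
      exact ⟨0, (Hc a).zero_mem, rfl, tp_one.symm⟩
    rw [← Ideal.eq_top_iff_one] at h1
    rw [h1]
    trivial
  | succ n ih =>
    rw [pow_succ]
    refine le_trans (Ideal.mul_mono ih (le_refl _)) ?_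
    apply span_mul_span_le
    rintro x ⟨m, hm, hGs, rfl⟩ y ⟨g, hg, hsg, _, rfl⟩
    rw [tp_mul]
    apply Ideal.subset_span
    exact ⟨m + g, _, ⟨g, m, hg, hsg, hGs, by ring⟩, rfl⟩

lemma feas_tp (hℓ : 2 ≤ ℓ) (haℓ : ℓ + 3 ≤ a) (hs1 : s + 1 = a * ℓ + ℓ)
    (haH : a ∈ Hc a) (ha1H : (a:ℕ) + 1 ∈ Hc a) (hs : s ∈ Hc a) (n : ℕ) :
    ∀ U V (h : Feas a ℓ (n+1) U V) (hmem : a*U+V ∈ Hc a),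
    tp k (Hc a) (a*U+V) hmem ∈
      (Submodule.colon (Ideal.span {tp k (Hc a) s hs})
        (((Ideal.span {tp k (Hc a) a haH, tp k (Hc a) (a+1) ha1H}) ^ (a-1) : Ideal (ssr k (Hc a))) : Set (ssr k (Hc a))))^(n+1) := by
  induction n with
  | zero =>
    intro U V h hmem
    rw [pow_one]
    exact tp_mem_I hℓ haℓ hs1 haH ha1H hs hmem (feas_E hℓ haℓ hs1 h).2
  | succ n ih =>
    intro U V h hmem
    obtain ⟨u, v, U₂, V₂, hU, hV, h1, h2⟩ := Feas_split hℓ haℓ (by omega : 1 ≤ n+1) h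
    have he : a*U+V = (a*u+v) + (a*U₂+V₂) := by subst hU; subst hV; ring
    have hmem1 : a*u+v ∈ Hc a := (feas_E hℓ haℓ hs1 h1).1
    have hmem2 : a*U₂+V₂ ∈ Hc a := rep_mem h2.2.1
    rw [tp_congr hmem he, ← tp_mul hmem1 hmem2]
    rw [pow_succ']
    exact Submodule.mul_mem_mul
      (tp_mem_I hℓ haℓ hs1 haH ha1H hs hmem1 (feas_E hℓ haℓ hs1 h1).2)
      (ih U₂ V₂ h2 hmem2)

lemma Ipow_le_QI {q : ℕ} (hℓ : 2 ≤ ℓ) (hq3 : 3 ≤ q) (haq : a = ℓ + q)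
    (hs1 : s + 1 = a * ℓ + ℓ)
    (haH : a ∈ Hc a) (ha1H : (a:ℕ) + 1 ∈ Hc a) (hs : s ∈ Hc a) :
    (Submodule.colon (Ideal.span {tp k (Hc a) s hs})
        (((Ideal.span {tp k (Hc a) a haH, tp k (Hc a) (a+1) ha1H}) ^ (a-1) : Ideal (ssr k (Hc a))) : Set (ssr k (Hc a))))^(q+1) ≤
    Ideal.span {tp k (Hc a) s hs} *
      (Submodule.colon (Ideal.span {tp k (Hc a) s hs})
        (((Ideal.span {tp k (Hc a) a haH, tp k (Hc a) (a+1) ha1H}) ^ (a-1) : Ideal (ssr k (Hc a))) : Set (ssr k (Hc a))))^q := by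
  have haℓ : ℓ + 3 ≤ a := by omega
  refine le_trans (Ideal.pow_right_mono (I_le_span_gen hℓ haℓ hs1 haH ha1H hs) (q+1)) ?_
  refine le_trans (spanGen_pow_le (q+1)) ?_
  rw [Ideal.span_le]
  rintro x ⟨m, hm, hGs, rfl⟩
  obtain ⟨U, V, rfl, hUV⟩ := Gsum_feas hℓ haℓ hs1 hGs
  obtain ⟨U', V', heq, hF⟩ := Feas_step hℓ hq3 haq hs1 hUV
  have he : a*U+V = s + (a*U'+V') := by omega
  have hmem2 : a*U'+V' ∈ Hc a := rep_mem hF.2.1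
  rw [tp_congr hm he, ← tp_mul hs hmem2]
  obtain ⟨q', rfl⟩ : ∃ q', q = q' + 1 := ⟨q - 1, by omega⟩
  exact Submodule.mul_mem_mul (Ideal.subset_span rfl)
    (feas_tp hℓ haℓ hs1 haH ha1H hs q' U' V' hF hmem2)

lemma QI_le_Ipow {q : ℕ} (hℓ : 2 ≤ ℓ) (haℓ : ℓ + 3 ≤ a)
    (hs1 : s + 1 = a * ℓ + ℓ)
    (haH : a ∈ Hc a) (ha1H : (a:ℕ) + 1 ∈ Hc a) (hs : s ∈ Hc a) :
    Ideal.span {tp k (Hc a) s hs} *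
      (Submodule.colon (Ideal.span {tp k (Hc a) s hs})
        (((Ideal.span {tp k (Hc a) a haH, tp k (Hc a) (a+1) ha1H}) ^ (a-1) : Ideal (ssr k (Hc a))) : Set (ssr k (Hc a))))^q ≤
    (Submodule.colon (Ideal.span {tp k (Hc a) s hs})
        (((Ideal.span {tp k (Hc a) a haH, tp k (Hc a) (a+1) ha1H}) ^ (a-1) : Ideal (ssr k (Hc a))) : Set (ssr k (Hc a))))^(q+1) := by
  have h1 : Ideal.span {tp k (Hc a) s hs} ≤
      Submodule.colon (Ideal.span {tp k (Hc a) s hs})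
        (((Ideal.span {tp k (Hc a) a haH, tp k (Hc a) (a+1) ha1H}) ^ (a-1) : Ideal (ssr k (Hc a))) : Set (ssr k (Hc a))) := by
    rw [Ideal.span_le]
    rintro x hx
    rw [Set.mem_singleton_iff] at hx
    subst hx
    exact tp_mem_I hℓ haℓ hs1 haH ha1H hs hs (le_refl s)
  refine le_trans (Ideal.mul_mono h1 (le_refl _)) ?_
  rw [← pow_succ']

end RingLemmas

/-- Theorem 3.8: for `q = a-1`, `s = aℓ + (ℓ-1)` with `ℓ ≥ 2`, `a ≥ ℓ+3`:
`(t^{aℓ+ℓ})^{a-ℓ} ∈ Q` but `∉ QI^{a-ℓ-1}`, hence `Q ∩ I^{a-ℓ} ≠ QI^{a-ℓ-1}`, `G(I)` is not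
Cohen-Macaulay, and `r_Q(I) = a - ℓ`. -/
theorem stmt18 (k : Type) [Field k] (a : ℕ)
    (H : AddSubmonoid ℕ) (hH : H = AddSubmonoid.closure {a, a + 1})
    (haH : a ∈ H) (ha1H : a + 1 ∈ H)
    (ℓ : ℕ) (hℓ2 : 2 ≤ ℓ) (haℓ : ℓ + 3 ≤ a)
    (s : ℕ) (hsval : s = a * ℓ + (ℓ - 1)) (hs : s ∈ H) (hm : a * ℓ + ℓ ∈ H)
    (𝔪 : Ideal (ssr k H)) (h𝔪 : 𝔪 = Ideal.span {tp k H a haH, tp k H (a + 1) ha1H})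
    (Q : Ideal (ssr k H)) (hQ : Q = Ideal.span {tp k H s hs})
    (I : Ideal (ssr k H)) (hI : I = Submodule.colon Q ((𝔪 ^ (a - 1) : Ideal (ssr k H)) : Set (ssr k H))) :
    tp k H (a * ℓ + ℓ) hm ^ (a - ℓ) ∈ Q ∧
    tp k H (a * ℓ + ℓ) hm ^ (a - ℓ) ∉ Q * I ^ (a - ℓ - 1) ∧
    Q ⊓ I ^ (a - ℓ) ≠ Q * I ^ (a - ℓ - 1) ∧
    ¬ (∀ n : ℕ, Q ⊓ I ^ (n + 1) = Q * I ^ n) ∧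
    sInf {n : ℕ | I ^ (n + 1) = Q * I ^ n} = a - ℓ := by
  subst hH
  subst hsval
  subst h𝔪
  subst hQ
  subst hI
  have hs1 : (a * ℓ + (ℓ - 1)) + 1 = a * ℓ + ℓ := by omega
  have hq3 : 3 ≤ a - ℓ := by omega
  have haq : a = ℓ + (a - ℓ) := by omega
  have hw : a - ℓ - 1 + 1 = a - ℓ := by omega
  have htpI : tp k (Hc a) (a * ℓ + ℓ) hm ∈
      Submodule.colon (Ideal.span {tp k (Hc a) (a * ℓ + (ℓ-1)) hs})
        (((Ideal.span {tp k (Hc a) a haH, tp k (Hc a) (a+1) ha1H}) ^ (a-1) : Ideal (ssr k (Hc a))) : Set (ssr k (Hc a))) :=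
    tp_mem_I hℓ2 haℓ hs1 haH ha1H hs hm (by omega)
  -- Conjunct 1
  have hC1 : tp k (Hc a) (a * ℓ + ℓ) hm ^ (a - ℓ) ∈
      Ideal.span {tp k (Hc a) (a * ℓ + (ℓ-1)) hs} := by
    rw [tp_pow hm (a-ℓ)]
    obtain ⟨p, hp⟩ : ∃ p, a - ℓ = p + 3 := ⟨a - ℓ - 3, by omega⟩
    obtain ⟨y, hy⟩ : ∃ y, a + y = (p+2)*ℓ + 1 := by
      refine ⟨(p+2)*ℓ + 1 - a, ?_⟩
      have e : (p+2)*ℓ = p*ℓ + 2*ℓ := by ring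
      have e2 : p*ℓ ≥ p*2 := Nat.mul_le_mul_left _ hℓ2
      omega
    have hD : a*a + (a+1)*y ∈ Hc a := mem_Hc_iff.2 ⟨a, y, rfl⟩
    have heq : (a-ℓ)*(a*ℓ+ℓ) = (a*ℓ+(ℓ-1)) + (a*a + (a+1)*y) := by
      rw [hp]
      have h2 : (a+1)*(a+y) = (a+1)*((p+2)*ℓ+1) := by rw [hy]
      have e1 : (a+1)*(a+y) = a*a + a + (a+1)*y := by ring
      have e2 : (a+1)*((p+2)*ℓ+1) = (p+2)*(a*ℓ+ℓ) + (a + 1) := by ring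
      have e3 : (p+3)*(a*ℓ+ℓ) = (p+2)*(a*ℓ+ℓ) + (a*ℓ+ℓ) := by ring
      omega
    exact mem_Q_of hs _ hD heq
  -- Conjunct 2
  have hC2 : tp k (Hc a) (a * ℓ + ℓ) hm ^ (a - ℓ) ∉
      Ideal.span {tp k (Hc a) (a * ℓ + (ℓ-1)) hs} *
      (Submodule.colon (Ideal.span {tp k (Hc a) (a * ℓ + (ℓ-1)) hs})
        (((Ideal.span {tp k (Hc a) a haH, tp k (Hc a) (a+1) ha1H}) ^ (a-1) : Ideal (ssr k (Hc a))) : Set (ssr k (Hc a)))) ^ (a - ℓ - 1) := by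
    intro hmem
    rw [tp_pow hm (a-ℓ)] at hmem
    have e : (a-ℓ)*(a*ℓ+ℓ) = ((a-ℓ-1)+1)*(a*ℓ+ℓ) := by rw [hw]
    rw [tp_congr _ e] at hmem
    exact tp_not_mem_QIn hℓ2 haℓ hs1 haH ha1H hs (by omega) _ hmem
  refine ⟨hC1, hC2, ?_, ?_, ?_⟩
  · -- Conjunct 3
    intro heq
    apply hC2
    rw [← heq]
    refine Submodule.mem_inf.2 ⟨hC1, ?_⟩
    exact Ideal.pow_mem_pow htpI (a-ℓ)
  · -- Conjunct 4
    intro hall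
    have h4 := hall (a - ℓ - 1)
    rw [hw] at h4
    apply hC2
    rw [← h4]
    refine Submodule.mem_inf.2 ⟨hC1, ?_⟩
    exact Ideal.pow_mem_pow htpI (a-ℓ)
  · -- Conjunct 5
    have hqmem : (Submodule.colon (Ideal.span {tp k (Hc a) (a * ℓ + (ℓ-1)) hs})
        (((Ideal.span {tp k (Hc a) a haH, tp k (Hc a) (a+1) ha1H}) ^ (a-1) : Ideal (ssr k (Hc a))) : Set (ssr k (Hc a)))) ^ ((a-ℓ) + 1) =
        Ideal.span {tp k (Hc a) (a * ℓ + (ℓ-1)) hs} *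
        (Submodule.colon (Ideal.span {tp k (Hc a) (a * ℓ + (ℓ-1)) hs})
          (((Ideal.span {tp k (Hc a) a haH, tp k (Hc a) (a+1) ha1H}) ^ (a-1) : Ideal (ssr k (Hc a))) : Set (ssr k (Hc a)))) ^ (a-ℓ) :=
      le_antisymm (Ipow_le_QI hℓ2 hq3 haq hs1 haH ha1H hs)
        (QI_le_Ipow hℓ2 haℓ hs1 haH ha1H hs)
    apply le_antisymm
    · exact Nat.sInf_le hqmem
    · by_contra hcon
      push_neg at hcon
      have hne : {n : ℕ | (Submodule.colon (Ideal.span {tp k (Hc a) (a * ℓ + (ℓ-1)) hs})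
          (((Ideal.span {tp k (Hc a) a haH, tp k (Hc a) (a+1) ha1H}) ^ (a-1) : Ideal (ssr k (Hc a))) : Set (ssr k (Hc a)))) ^ (n + 1) =
          Ideal.span {tp k (Hc a) (a * ℓ + (ℓ-1)) hs} *
          (Submodule.colon (Ideal.span {tp k (Hc a) (a * ℓ + (ℓ-1)) hs})
            (((Ideal.span {tp k (Hc a) a haH, tp k (Hc a) (a+1) ha1H}) ^ (a-1) : Ideal (ssr k (Hc a))) : Set (ssr k (Hc a)))) ^ n}.Nonempty :=
        ⟨a - ℓ, hqmem⟩
      have hminmem := Nat.sInf_mem hne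
      set n₀ := sInf {n : ℕ | (Submodule.colon (Ideal.span {tp k (Hc a) (a * ℓ + (ℓ-1)) hs})
          (((Ideal.span {tp k (Hc a) a haH, tp k (Hc a) (a+1) ha1H}) ^ (a-1) : Ideal (ssr k (Hc a))) : Set (ssr k (Hc a)))) ^ (n + 1) =
          Ideal.span {tp k (Hc a) (a * ℓ + (ℓ-1)) hs} *
          (Submodule.colon (Ideal.span {tp k (Hc a) (a * ℓ + (ℓ-1)) hs})
            (((Ideal.span {tp k (Hc a) a haH, tp k (Hc a) (a+1) ha1H}) ^ (a-1) : Ideal (ssr k (Hc a))) : Set (ssr k (Hc a)))) ^ n} with hn₀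
      have hmembad : tp k (Hc a) ((n₀+1) * (a*ℓ+ℓ))
          (by simpa [nsmul_eq_mul] using nsmul_mem hm (n₀+1)) ∈
          Ideal.span {tp k (Hc a) (a * ℓ + (ℓ-1)) hs} *
          (Submodule.colon (Ideal.span {tp k (Hc a) (a * ℓ + (ℓ-1)) hs})
            (((Ideal.span {tp k (Hc a) a haH, tp k (Hc a) (a+1) ha1H}) ^ (a-1) : Ideal (ssr k (Hc a))) : Set (ssr k (Hc a)))) ^ n₀ := by
        rw [← hminmem]
        have hh := Ideal.pow_mem_pow htpI (n₀+1)
        rwa [tp_pow hm (n₀+1)] at hh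
      exact tp_not_mem_QIn hℓ2 haℓ hs1 haH ha1H hs (by omega) _ hmembad
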